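/- Let a > 0, Ω = (−a,a), T̂ > 0, and A > 0. Let (ε_k) be a sequence of positive numbers with ε_k → 0, and let h_k : [−a,a] × [0,T̂] → ℝ be continuous functions with |h_k| ≤ A for all k, converging uniformly on [−a,a] × [0,T̂] to a function h. Suppose there is B < ∞ with ∫_{−a}^{a} G_{ε_k}(h_k(x,t)) dx ≤ B for all k and all t ∈ [0,T̂]. Then for every t ∈ [0,T̂], the function x ↦ 1/h(x,t) is integrable on Ω and ∫_{−a}^{a} dx/h(x,t) ≤ 2·( B + 2a/A ); in particular ∫_Ω dx/h(x,t) is bounded uniformly in t. -/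

import Mathlib

/-- `g_ε(s) = -∫_s^A dr / (|r|³ + ε)`. -/
noncomputable def gEps (A ε s : ℝ) : ℝ := -∫ r in s..A, 1 / (|r| ^ 3 + ε)

/-- `G_ε(s) = -∫_s^A g_ε(r) dr`. -/
noncomputable def GEps (A ε s : ℝ) : ℝ := -∫ r in s..A, gEps A ε r

open MeasureTheory intervalIntegral Filter Set
open scoped ENNReal
lemma cont_integrand {ε : ℝ} (hε : 0 < ε) : Continuous fun u : ℝ => 1 / (|u| ^ 3 + ε) := by
  apply Continuous.div continuous_const (by continuity)
  intro u; positivity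

lemma integrand_nonneg {ε : ℝ} (hε : 0 < ε) (u : ℝ) : 0 ≤ 1 / (|u| ^ 3 + ε) := by positivity

lemma gEps_cont {A ε : ℝ} (hε : 0 < ε) : Continuous (gEps A ε) := by
  have : Continuous fun s => ∫ r in A..s, 1 / (|r| ^ 3 + ε) :=
    continuous_primitive (fun a b => (cont_integrand hε).intervalIntegrable a b) A
  have heq : ∀ s, gEps A ε s = ∫ r in A..s, 1 / (|r| ^ 3 + ε) := by
    intro s; rw [gEps, intervalIntegral.integral_symm]; ring
  simpa [funext heq] using this

lemma neg_gEps_eq (A ε s : ℝ) : -gEps A ε s = ∫ r in s..A, 1 / (|r| ^ 3 + ε) := by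
  simp [gEps]

lemma neg_gEps_nonneg {A ε s : ℝ} (hε : 0 < ε) (hsA : s ≤ A) : 0 ≤ -gEps A ε s := by
  rw [neg_gEps_eq]
  exact intervalIntegral.integral_nonneg hsA (fun u _ => integrand_nonneg hε u)

lemma GEps_eq (A ε s : ℝ) : GEps A ε s = ∫ r in s..A, (∫ u in r..A, 1 / (|u| ^ 3 + ε)) := by
  rw [GEps, ← intervalIntegral.integral_neg]
  congr 1; ext r; rw [← neg_gEps_eq]

lemma GEps_cont {A ε : ℝ} (hε : 0 < ε) : Continuous (GEps A ε) := by
  have : Continuous fun s => ∫ r in A..s, gEps A ε r :=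
    continuous_primitive (fun a b => (gEps_cont hε).intervalIntegrable a b) A
  have heq : ∀ s, GEps A ε s = ∫ r in A..s, gEps A ε r := by
    intro s; rw [GEps, intervalIntegral.integral_symm]; ring
  simp only [funext heq]
  exact this

lemma GEps_nonneg {A ε s : ℝ} (hε : 0 < ε) (hsA : s ≤ A) : 0 ≤ GEps A ε s := by
  rw [GEps_eq]
  refine intervalIntegral.integral_nonneg hsA (fun r hr => ?_)
  exact intervalIntegral.integral_nonneg hr.2 (fun u _ => integrand_nonneg hε u)

lemma GEps_mono {A ε s s' : ℝ} (hε : 0 < ε) (hss' : s ≤ s') (hs'A : s' ≤ A) :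
    GEps A ε s' ≤ GEps A ε s := by
  rw [GEps_eq, GEps_eq]
  have hint : ∀ a b : ℝ, IntervalIntegrable (fun r => ∫ u in r..A, 1 / (|u| ^ 3 + ε)) volume a b := by
    intro a b
    have : Continuous fun r => ∫ u in r..A, 1 / (|u| ^ 3 + ε) := by
      have := gEps_cont (A := A) hε
      have heq : (fun r => ∫ u in r..A, 1 / (|u| ^ 3 + ε)) = fun r => -gEps A ε r := by
        ext r; rw [← neg_gEps_eq]
      rw [heq]; exact this.neg
    exact this.intervalIntegrable a b
  rw [← intervalIntegral.integral_add_adjacent_intervals (hint s s') (hint s' A)]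
  have h0 : 0 ≤ ∫ r in s..s', (∫ u in r..A, 1 / (|u| ^ 3 + ε)) := by
    refine intervalIntegral.integral_nonneg hss' (fun r hr => ?_)
    exact intervalIntegral.integral_nonneg (hr.2.trans hs'A) (fun u _ => integrand_nonneg hε u)
  linarith

lemma integral_inv_cube {r A : ℝ} (hr : 0 < r) (hrA : r ≤ A) :
    ∫ u in r..A, (u^3)⁻¹ = 1/(2*r^2) - 1/(2*A^2) := by
  have h0 : (0:ℝ) ∉ Set.uIcc r A := Set.notMem_uIcc_of_lt hr (hr.trans_le hrA)
  have heq : (fun u:ℝ => (u^3)⁻¹) = fun u:ℝ => u^(-3:ℤ) := by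
    ext u; rw [zpow_neg, zpow_ofNat]
  rw [heq, integral_zpow (Or.inr ⟨by norm_num, h0⟩)]
  have hrne : r ≠ 0 := ne_of_gt hr
  have hAne : A ≠ 0 := ne_of_gt (hr.trans_le hrA)
  norm_num [zpow_neg, zpow_ofNat]
  field_simp
  ring

lemma integral_inv_sq {s A : ℝ} (hs : 0 < s) (hsA : s ≤ A) :
    ∫ r in s..A, (r^2)⁻¹ = 1/s - 1/A := by
  have h0 : (0:ℝ) ∉ Set.uIcc s A := Set.notMem_uIcc_of_lt hs (hs.trans_le hsA)
  have heq : (fun r:ℝ => (r^2)⁻¹) = fun r:ℝ => r^(-2:ℤ) := by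
    ext r; rw [zpow_neg, zpow_ofNat]
  rw [heq, integral_zpow (Or.inr ⟨by norm_num, h0⟩)]
  have hsne : s ≠ 0 := ne_of_gt hs
  have hAne : A ≠ 0 := ne_of_gt (hs.trans_le hsA)
  norm_num [zpow_neg, zpow_ofNat]
  field_simp
  ring

lemma neg_gEps_cont {A ε : ℝ} (hε : 0 < ε) :
    Continuous fun r => ∫ u in r..A, 1 / (|u| ^ 3 + ε) := by
  have heq : (fun r => ∫ u in r..A, 1 / (|u| ^ 3 + ε)) = fun r => -gEps A ε r := by
    ext r; rw [← neg_gEps_eq]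
  rw [heq]; exact (gEps_cont hε).neg

lemma GEps_lower {A ε s : ℝ} (hε : 0 < ε) (hs : 0 < s) (hsA : s ≤ A) :
    s ^ 3 / (s ^ 3 + ε) * (1/(2*s) - 1/(2*A) - (A - s)/(2*A^2)) ≤ GEps A ε s := by
  have hA : 0 < A := hs.trans_le hsA
  set c : ℝ := s ^ 3 / (s ^ 3 + ε) with hcdef
  have hc0 : 0 ≤ c := by positivity
  rw [GEps_eq]
  have contmin : ∀ {p q : ℝ}, 0 < p →
      IntervalIntegrable (fun u : ℝ => c * (u^3)⁻¹) volume p (max p A) := by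
    intro p q hp
    apply ContinuousOn.intervalIntegrable
    apply continuousOn_const.mul
    apply ContinuousOn.inv₀ ((continuous_pow 3).continuousOn)
    intro x hx
    rw [Set.uIcc_of_le (le_max_left p A)] at hx
    have : 0 < x := lt_of_lt_of_le hp hx.1
    positivity
  -- inner bound
  have inner : ∀ r ∈ Set.Icc s A, c * (1/(2*r^2) - 1/(2*A^2)) ≤ ∫ u in r..A, 1/(|u|^3+ε) := by
    intro r hr
    have hr0 : 0 < r := lt_of_lt_of_le hs hr.1
    have hmax : max r A = A := max_eq_right hr.2
    have intc : IntervalIntegrable (fun u : ℝ => c * (u^3)⁻¹) volume r A := by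
      have := contmin (p := r) (q := A) hr0; rwa [hmax] at this
    have step : ∫ u in r..A, c * (u^3)⁻¹ ≤ ∫ u in r..A, 1/(|u|^3+ε) := by
      apply intervalIntegral.integral_mono_on hr.2 intc
        ((cont_integrand hε).intervalIntegrable r A)
      intro u hu
      have hu0 : 0 < u := lt_of_lt_of_le hr0 hu.1
      have habs : |u| = u := abs_of_pos hu0
      rw [habs]
      have hv : (0:ℝ) < (u^3)⁻¹ := by positivity
      have hvu : (u^3)⁻¹ * u^3 = 1 := inv_mul_cancel₀ (by positivity)
      have hsu : s^3 ≤ u^3 := pow_le_pow_left₀ hs.le (le_trans hr.1 hu.1) 3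
      have h1 : s^3 * (u^3)⁻¹ ≤ 1 := by
        calc s^3 * (u^3)⁻¹ ≤ u^3 * (u^3)⁻¹ := by
              apply mul_le_mul_of_nonneg_right hsu hv.le
          _ = 1 := by rw [mul_comm]; exact hvu
      rw [hcdef, div_mul_eq_mul_div, div_le_div_iff₀ (by positivity) (by positivity)]
      have expand : s ^ 3 * (u ^ 3)⁻¹ * (u ^ 3 + ε) = s^3 + s^3 * (u^3)⁻¹ * ε := by
        field_simp
      rw [expand, one_mul]
      nlinarith [mul_le_mul_of_nonneg_right h1 hε.le]
    calc c * (1/(2*r^2) - 1/(2*A^2)) = ∫ u in r..A, c * (u^3)⁻¹ := by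
          rw [intervalIntegral.integral_const_mul, integral_inv_cube hr0 hr.2]
      _ ≤ _ := step
  -- outer bound
  have intL : IntervalIntegrable (fun r : ℝ => c * (1/(2*r^2) - 1/(2*A^2))) volume s A := by
    apply ContinuousOn.intervalIntegrable
    apply continuousOn_const.mul
    apply ContinuousOn.sub _ continuousOn_const
    apply ContinuousOn.div continuousOn_const (by fun_prop)
    intro x hx
    rw [Set.uIcc_of_le hsA] at hx
    have : 0 < x := lt_of_lt_of_le hs hx.1
    positivity
  have mono := intervalIntegral.integral_mono_on hsA intL
    ((neg_gEps_cont (A := A) hε).intervalIntegrable s A) inner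
  refine le_trans (le_of_eq ?_) mono
  rw [intervalIntegral.integral_const_mul]
  congr 1
  have e1 : (fun r:ℝ => 1/(2*r^2) - 1/(2*A^2)) = fun r:ℝ => (1/2) * (r^2)⁻¹ - 1/(2*A^2) := by
    ext r; rw [one_div, mul_inv, ← one_div 2, div_mul_eq_mul_div, mul_comm]
  rw [e1]
  have int1 : IntervalIntegrable (fun r : ℝ => (1/2) * (r^2)⁻¹) volume s A := by
    apply ContinuousOn.intervalIntegrable
    apply continuousOn_const.mul
    apply ContinuousOn.inv₀ ((continuous_pow 2).continuousOn)
    intro x hx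
    rw [Set.uIcc_of_le hsA] at hx
    have : 0 < x := lt_of_lt_of_le hs hx.1
    positivity
  rw [intervalIntegral.integral_sub int1 (intervalIntegrable_const),
    intervalIntegral.integral_const_mul, integral_inv_sq hs hsA,
    intervalIntegral.integral_const, smul_eq_mul]
  have hsne : s ≠ 0 := ne_of_gt hs
  have hAne : A ≠ 0 := ne_of_gt hA
  field_simp

lemma K_lower {A s : ℝ} (hA : 0 < A) (hs : 0 ≤ s) :
    1/(2*s) - 1/A ≤ 1/(2*s) - 1/(2*A) - (A - s)/(2*A^2) := by
  have h1 : (A - s)/(2*A^2) ≤ 1/(2*A) := by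
    rw [div_le_div_iff₀ (by positivity) (by positivity)]
    nlinarith
  have e : 1/A = 1/(2*A) + 1/(2*A) := by field_simp; ring
  linarith

lemma liminf_ge_of_pos {A : ℝ} (hA : 0 < A) {εk : ℕ → ℝ} (hεpos : ∀ k, 0 < εk k)
    (hεlim : Filter.Tendsto εk Filter.atTop (nhds 0)) {sk : ℕ → ℝ} {s0 : ℝ} (hs0 : 0 < s0)
    (hsk : Filter.Tendsto sk Filter.atTop (nhds s0)) (hskA : ∀ k, sk k ≤ A) :
    ENNReal.ofReal (1/(2*s0) - 1/A) ≤
      Filter.atTop.liminf fun k => ENNReal.ofReal (GEps A (εk k) (sk k)) := by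
  set K : ℝ → ℝ := fun s => 1/(2*s) - 1/(2*A) - (A - s)/(2*A^2) with hK
  have hconv : Tendsto (fun k => sk k ^ 3 / (sk k ^ 3 + εk k) * K (sk k)) atTop (nhds (K s0)) := by
    have hpow : Tendsto (fun k => sk k ^ 3) atTop (nhds (s0 ^ 3)) := hsk.pow 3
    have h1 : Tendsto (fun k => sk k ^ 3 / (sk k ^ 3 + εk k)) atTop (nhds 1) := by
      have hden : Tendsto (fun k => sk k ^ 3 + εk k) atTop (nhds (s0 ^ 3)) := by
        simpa using hpow.add hεlim
      have := hpow.div hden (by positivity)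
      rw [div_self (ne_of_gt (by positivity : (0:ℝ) < s0 ^ 3))] at this; exact this
    have h2 : Tendsto (fun k => K (sk k)) atTop (nhds (K s0)) := by
      have hc : ContinuousAt K s0 := by
        apply ContinuousAt.sub
        · apply ContinuousAt.sub
          · exact ContinuousAt.div continuousAt_const (by fun_prop) (by positivity)
          · exact continuousAt_const
        · exact ContinuousAt.div (by fun_prop) continuousAt_const (by positivity)
      exact hc.tendsto.comp hsk
    simpa using h1.mul h2
  have hofot : Tendsto (fun k => ENNReal.ofReal (sk k ^ 3 / (sk k ^ 3 + εk k) * K (sk k)))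
      atTop (nhds (ENNReal.ofReal (K s0))) :=
    (ENNReal.continuous_ofReal.tendsto _).comp hconv
  have hpos : ∀ᶠ k in atTop, 0 < sk k := hsk.eventually (eventually_gt_nhds hs0)
  have hev : ∀ᶠ k in atTop, ENNReal.ofReal (sk k ^ 3 / (sk k ^ 3 + εk k) * K (sk k)) ≤
      ENNReal.ofReal (GEps A (εk k) (sk k)) := by
    filter_upwards [hpos] with k hk
    exact ENNReal.ofReal_le_ofReal (GEps_lower (hεpos k) hk (hskA k))
  calc ENNReal.ofReal (1/(2*s0) - 1/A) ≤ ENNReal.ofReal (K s0) :=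
        ENNReal.ofReal_le_ofReal (K_lower hA hs0.le)
    _ = Filter.atTop.liminf (fun k => ENNReal.ofReal (sk k ^ 3 / (sk k ^ 3 + εk k) * K (sk k))) :=
        hofot.liminf_eq.symm
    _ ≤ _ := Filter.liminf_le_liminf hev

lemma tendsto_top_of_nonpos {A : ℝ} (hA : 0 < A) {εk : ℕ → ℝ} (hεpos : ∀ k, 0 < εk k)
    (hεlim : Filter.Tendsto εk Filter.atTop (nhds 0)) {sk : ℕ → ℝ} {s0 : ℝ} (hs0 : s0 ≤ 0)
    (hsk : Filter.Tendsto sk Filter.atTop (nhds s0)) (hskA : ∀ k, sk k ≤ A) :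
    Tendsto (fun k => GEps A (εk k) (sk k)) atTop atTop := by
  rw [tendsto_atTop]
  intro M
  set M' : ℝ := max M 0 with hM'
  have hM'0 : 0 ≤ M' := le_max_right M 0
  have hd1 : 0 < 2*(2*M' + 1/A) + 1 := by positivity
  set δ : ℝ := min A (1/(2*(2*M' + 1/A) + 1)) with hδdef
  have hδ0 : 0 < δ := lt_min hA (by positivity)
  have hδA : δ ≤ A := min_le_left _ _
  have hKδ : 2*M' ≤ 1/(2*δ) - 1/A := by
    have hδle : δ ≤ 1/(2*(2*M' + 1/A) + 1) := min_le_right _ _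
    have h2 : 2*(2*M' + 1/A) ≤ 1/δ := by
      rw [le_div_iff₀ hδ0]
      calc (2*(2*M' + 1/A)) * δ ≤ (2*(2*M' + 1/A) + 1) * δ := by nlinarith
        _ ≤ (2*(2*M' + 1/A) + 1) * (1/(2*(2*M' + 1/A) + 1)) :=
            mul_le_mul_of_nonneg_left hδle hd1.le
        _ = 1 := mul_one_div_cancel (ne_of_gt hd1)
    have e2 : 1/(2*δ) = (1/δ)/2 := by
      rw [one_div, one_div, mul_inv]; ring
    have hA1 : 0 < 1/A := by positivity
    rw [e2]; linarith
  have hev1 : ∀ᶠ k in atTop, sk k ≤ δ :=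
    hsk.eventually (eventually_le_nhds (lt_of_le_of_lt hs0 hδ0))
  have hev2 : ∀ᶠ k in atTop, εk k ≤ δ^3 :=
    hεlim.eventually (eventually_le_nhds (by positivity))
  filter_upwards [hev1, hev2] with k h1 h2
  have step1 : GEps A (εk k) δ ≤ GEps A (εk k) (sk k) := GEps_mono (hεpos k) h1 hδA
  have step2 : δ^3/(δ^3 + εk k) * (1/(2*δ) - 1/(2*A) - (A - δ)/(2*A^2)) ≤ GEps A (εk k) δ :=
    GEps_lower (hεpos k) hδ0 hδA
  have hc : (1:ℝ)/2 ≤ δ^3/(δ^3 + εk k) := by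
    rw [le_div_iff₀ (add_pos (pow_pos hδ0 3) (hεpos k))]
    nlinarith [(hεpos k).le]
  have hKge : 2*M' ≤ 1/(2*δ) - 1/(2*A) - (A - δ)/(2*A^2) :=
    le_trans hKδ (K_lower hA hδ0.le)
  calc M ≤ M' := le_max_left M 0
    _ = (1/2) * (2*M') := by ring
    _ ≤ (δ^3/(δ^3 + εk k)) * (1/(2*δ) - 1/(2*A) - (A - δ)/(2*A^2)) :=
        mul_le_mul hc hKge (by linarith) (by positivity)
    _ ≤ GEps A (εk k) δ := step2
    _ ≤ GEps A (εk k) (sk k) := step1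

/-- Uniform bound on `∫ dx / h(x,t)` for the uniform limit: under uniformly bounded
entropies, `1/h(·,t)` is integrable on `Ω` with `∫ dx/h(x,t) ≤ 2(B + 2a/A)`. -/
theorem limit_reciprocal_integrable_and_bounded
    (a Thatt A B : ℝ) (ha : 0 < a) (hThatt : 0 < Thatt) (hA : 0 < A)
    (εk : ℕ → ℝ) (hεpos : ∀ k, 0 < εk k)
    (hεlim : Filter.Tendsto εk Filter.atTop (nhds 0))
    (hk : ℕ → ℝ → ℝ → ℝ) (h : ℝ → ℝ → ℝ)
    (hcont : ∀ k, ContinuousOn (fun p : ℝ × ℝ => hk k p.1 p.2)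
      (Set.Icc (-a) a ×ˢ Set.Icc 0 Thatt))
    (hbdd : ∀ k, ∀ x ∈ Set.Icc (-a) a, ∀ t ∈ Set.Icc (0:ℝ) Thatt, |hk k x t| ≤ A)
    (hunif : TendstoUniformlyOn (fun k (p : ℝ × ℝ) => hk k p.1 p.2)
      (fun p : ℝ × ℝ => h p.1 p.2) Filter.atTop (Set.Icc (-a) a ×ˢ Set.Icc 0 Thatt))
    (hB : ∀ k, ∀ t ∈ Set.Icc (0:ℝ) Thatt,
      (∫ x in (-a)..a, GEps A (εk k) (hk k x t)) ≤ B) :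
    ∀ t ∈ Set.Icc (0:ℝ) Thatt,
      MeasureTheory.IntegrableOn (fun x => 1 / h x t) (Set.Ioo (-a) a) ∧
      (∫ x in (-a)..a, 1 / h x t) ≤ 2 * (B + 2 * a / A) := by
  intro t ht
  have hIoo : Set.Ioo (-a) a ⊆ Set.Icc (-a) a := Set.Ioo_subset_Icc_self
  -- slice continuity
  have hslice : ∀ k, ContinuousOn (fun x => hk k x t) (Set.Icc (-a) a) := by
    intro k
    have := (hcont k).comp ((continuous_id.prodMk continuous_const).continuousOn)
      (fun x hx => Set.mk_mem_prod hx ht)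
    simpa [Function.comp_def] using this
  have hconth : ContinuousOn (fun p : ℝ × ℝ => h p.1 p.2)
      (Set.Icc (-a) a ×ˢ Set.Icc 0 Thatt) :=
    hunif.continuousOn (Filter.Eventually.of_forall hcont).frequently
  have hsliceh : ContinuousOn (fun x => h x t) (Set.Icc (-a) a) := by
    have := hconth.comp ((continuous_id.prodMk continuous_const).continuousOn)
      (fun x hx => Set.mk_mem_prod hx ht)
    simpa [Function.comp_def] using this
  have hptw : ∀ x ∈ Set.Icc (-a) a,
      Tendsto (fun k => hk k x t) atTop (nhds (h x t)) := fun x hx =>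
    hunif.tendsto_at (Set.mk_mem_prod hx ht)
  have hbddA : ∀ x ∈ Set.Icc (-a) a, ∀ k, hk k x t ≤ A := fun x hx k =>
    (le_abs_self _).trans (hbdd k x hx t ht)
  -- measurability of the entropy integrands
  have hGcont : ∀ k, ContinuousOn (fun x => GEps A (εk k) (hk k x t)) (Set.Icc (-a) a) :=
    fun k => (GEps_cont (hεpos k)).comp_continuousOn (hslice k)
  have hFmeas : ∀ k, AEMeasurable (fun x => ENNReal.ofReal (GEps A (εk k) (hk k x t)))
      (volume.restrict (Set.Ioo (-a) a)) := fun k =>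
    ENNReal.measurable_ofReal.comp_aemeasurable
      (((hGcont k).mono hIoo).aemeasurable measurableSet_Ioo)
  have hnnk : ∀ k, ∀ x ∈ Set.Icc (-a) a, 0 ≤ GEps A (εk k) (hk k x t) := fun k x hx =>
    GEps_nonneg (hεpos k) (hbddA x hx k)
  have hB0 : 0 ≤ B :=
    le_trans (intervalIntegral.integral_nonneg (by linarith) (fun x hx => hnnk 0 x hx))
      (hB 0 t ht)
  -- uniform lintegral bound
  have hFle : ∀ k, (∫⁻ x in Set.Ioo (-a) a, ENNReal.ofReal (GEps A (εk k) (hk k x t)))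
      ≤ ENNReal.ofReal B := by
    intro k
    have hint : IntegrableOn (fun x => GEps A (εk k) (hk k x t)) (Set.Ioo (-a) a) :=
      ((hGcont k).integrableOn_Icc).mono_set hIoo
    have hnnae : 0 ≤ᵐ[volume.restrict (Set.Ioo (-a) a)] fun x => GEps A (εk k) (hk k x t) :=
      (ae_restrict_iff' measurableSet_Ioo).2
        (Filter.Eventually.of_forall fun x hx => hnnk k x (hIoo hx))
    rw [← MeasureTheory.ofReal_integral_eq_lintegral_ofReal hint hnnae]
    apply ENNReal.ofReal_le_ofReal
    have heq : ∫ x in Set.Ioo (-a) a, GEps A (εk k) (hk k x t)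
        = ∫ x in (-a)..a, GEps A (εk k) (hk k x t) := by
      rw [intervalIntegral.integral_of_le (by linarith : -a ≤ a),
        MeasureTheory.integral_Ioc_eq_integral_Ioo]
    rw [heq]; exact hB k t ht
  -- Fatou
  have fatou : (∫⁻ x in Set.Ioo (-a) a,
      Filter.atTop.liminf fun k => ENNReal.ofReal (GEps A (εk k) (hk k x t)))
      ≤ ENNReal.ofReal B := by
    refine le_trans (MeasureTheory.lintegral_liminf_le' hFmeas) ?_
    refine le_trans (Filter.liminf_le_liminf (Filter.Eventually.of_forall hFle)) ?_
    simp
  have hφmeas : AEMeasurable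
      (fun x => Filter.atTop.liminf fun k => ENNReal.ofReal (GEps A (εk k) (hk k x t)))
      (volume.restrict (Set.Ioo (-a) a)) := by
    refine ⟨fun x => Filter.atTop.liminf fun k => (hFmeas k).mk _ x,
      Measurable.liminf (fun k => (hFmeas k).measurable_mk), ?_⟩
    filter_upwards [MeasureTheory.ae_all_iff.2 fun k => (hFmeas k).ae_eq_mk] with x hx
    exact congrArg (fun u : ℕ → ENNReal => Filter.liminf u Filter.atTop) (funext hx)
  -- a.e. positivity of h
  have haepos : ∀ᵐ x ∂(volume.restrict (Set.Ioo (-a) a)), 0 < h x t := by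
    have hlt := MeasureTheory.ae_lt_top' hφmeas
      (lt_of_le_of_lt fatou ENNReal.ofReal_lt_top).ne
    filter_upwards [hlt, MeasureTheory.ae_restrict_mem measurableSet_Ioo] with x hx hxΩ
    by_contra hpos
    push_neg at hpos
    have hdiv : Tendsto (fun k => GEps A (εk k) (hk k x t)) atTop atTop :=
      tendsto_top_of_nonpos hA hεpos hεlim hpos (hptw x (hIoo hxΩ))
        (fun k => hbddA x (hIoo hxΩ) k)
    have htop : Tendsto (fun k => ENNReal.ofReal (GEps A (εk k) (hk k x t))) atTop (nhds ⊤) :=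
      ENNReal.tendsto_ofReal_atTop.comp hdiv
    rw [htop.liminf_eq] at hx
    exact absurd hx (lt_irrefl ⊤)
  -- compare with the explicit minorant
  have hg_le : ∀ᵐ x ∂(volume.restrict (Set.Ioo (-a) a)),
      ENNReal.ofReal (1/(2 * h x t) - 1/A) ≤
        Filter.atTop.liminf fun k => ENNReal.ofReal (GEps A (εk k) (hk k x t)) := by
    filter_upwards [haepos, MeasureTheory.ae_restrict_mem measurableSet_Ioo] with x hpos hxΩ
    exact liminf_ge_of_pos hA hεpos hεlim hpos (hptw x (hIoo hxΩ))
      (fun k => hbddA x (hIoo hxΩ) k)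
  have hg_int : (∫⁻ x in Set.Ioo (-a) a, ENNReal.ofReal (1/(2 * h x t) - 1/A))
      ≤ ENNReal.ofReal B :=
    le_trans (MeasureTheory.lintegral_mono_ae hg_le) fatou
  -- bound on ∫⁻ 1/(2h)
  have hhalf : (∫⁻ x in Set.Ioo (-a) a, ENNReal.ofReal (1/(2 * h x t)))
      ≤ ENNReal.ofReal (B + 2*a/A) := by
    have hptle : ∀ x, ENNReal.ofReal (1/(2 * h x t)) ≤
        ENNReal.ofReal (1/(2 * h x t) - 1/A) + ENNReal.ofReal (1/A) := by
      intro x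
      calc ENNReal.ofReal (1/(2 * h x t))
          = ENNReal.ofReal ((1/(2 * h x t) - 1/A) + 1/A) := by ring_nf
        _ ≤ _ := ENNReal.ofReal_add_le
    calc ∫⁻ x in Set.Ioo (-a) a, ENNReal.ofReal (1/(2 * h x t))
        ≤ ∫⁻ x in Set.Ioo (-a) a,
            (ENNReal.ofReal (1/(2 * h x t) - 1/A) + ENNReal.ofReal (1/A)) :=
          MeasureTheory.lintegral_mono hptle
      _ = (∫⁻ x in Set.Ioo (-a) a, ENNReal.ofReal (1/(2 * h x t) - 1/A))
            + ENNReal.ofReal (1/A) * volume (Set.Ioo (-a) a) := by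
          rw [MeasureTheory.lintegral_add_right _ measurable_const,
            MeasureTheory.setLIntegral_const]
      _ ≤ ENNReal.ofReal B + ENNReal.ofReal (1/A) * ENNReal.ofReal (2*a) := by
          have hvol : volume (Set.Ioo (-a) a) = ENNReal.ofReal (2*a) := by
            rw [Real.volume_Ioo]; congr 1; ring
          rw [hvol]
          exact add_le_add_left hg_int _
      _ = ENNReal.ofReal (B + 2*a/A) := by
          rw [← ENNReal.ofReal_mul (by positivity), ← ENNReal.ofReal_add hB0 (by positivity)]
          congr 1; field_simp
  -- bound on ∫⁻ 1/h
  have hfull : (∫⁻ x in Set.Ioo (-a) a, ENNReal.ofReal (1 / h x t))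
      ≤ ENNReal.ofReal (2*(B + 2*a/A)) := by
    have hpt : ∀ x : ℝ, ENNReal.ofReal (1 / h x t) = 2 * ENNReal.ofReal (1/(2 * h x t)) := by
      intro x
      rw [show ((2:ℝ≥0∞)) = ENNReal.ofReal 2 by norm_num,
        ← ENNReal.ofReal_mul (by norm_num : (0:ℝ) ≤ 2)]
      congr 1
      rw [one_div, one_div, mul_inv]; ring
    calc (∫⁻ x in Set.Ioo (-a) a, ENNReal.ofReal (1 / h x t))
        = ∫⁻ x in Set.Ioo (-a) a, 2 * ENNReal.ofReal (1/(2 * h x t)) := by simp_rw [hpt]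
      _ = 2 * ∫⁻ x in Set.Ioo (-a) a, ENNReal.ofReal (1/(2 * h x t)) :=
          MeasureTheory.lintegral_const_mul' 2 _ (by norm_num)
      _ ≤ 2 * ENNReal.ofReal (B + 2*a/A) := mul_le_mul_right hhalf 2
      _ = ENNReal.ofReal (2*(B + 2*a/A)) := by
          rw [ENNReal.ofReal_mul (by norm_num : (0:ℝ) ≤ 2)]
          norm_num
  -- assemble
  have hmeas_inv : AEMeasurable (fun x => 1 / h x t) (volume.restrict (Set.Ioo (-a) a)) := by
    simp_rw [one_div]
    exact ((hsliceh.mono hIoo).aemeasurable measurableSet_Ioo).inv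
  have hnninv : 0 ≤ᵐ[volume.restrict (Set.Ioo (-a) a)] fun x => 1 / h x t := by
    filter_upwards [haepos] with x hx
    positivity
  have hint : IntegrableOn (fun x => 1 / h x t) (Set.Ioo (-a) a) := by
    refine ⟨hmeas_inv.aestronglyMeasurable, ?_⟩
    rw [MeasureTheory.hasFiniteIntegral_iff_ofReal hnninv]
    exact lt_of_le_of_lt hfull ENNReal.ofReal_lt_top
  refine ⟨hint, ?_⟩
  have heqI : ∫ x in (-a)..a, 1 / h x t = ∫ x in Set.Ioo (-a) a, 1 / h x t := by
    rw [intervalIntegral.integral_of_le (by linarith : -a ≤ a),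
      MeasureTheory.integral_Ioc_eq_integral_Ioo]
  rw [heqI, MeasureTheory.integral_eq_lintegral_of_nonneg_ae hnninv
    hmeas_inv.aestronglyMeasurable]
  have hfin := ENNReal.toReal_mono ENNReal.ofReal_ne_top hfull
  rwa [ENNReal.toReal_ofReal (by
    have h2 : 0 ≤ 2*a/A := by positivity
    linarith)] at hfin
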